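/- Let Ω ∈ ℂ^{m×m} be skew-Hermitian and s ∈ [0,1]. Then the skew-Hermitian part of e^{−stΩ}((1−s)I + s e^{tΩ}) equals ∑_{k odd} [((1−s)s^k(−1)^k + s(1−s)^k)/k!] (tΩ)^k; in particular, it vanishes identically when s = 1/2. -/

import Mathlib

open Matrix NormedSpace

lemma expS_hasSum {m : ℕ} (A : Matrix (Fin m) (Fin m) ℂ) (c : ℂ) :
    HasSum (fun k : ℕ => (c ^ k * (k.factorial : ℂ)⁻¹) • A ^ k) (NormedSpace.exp (c • A)) := by
  letI : SeminormedRing (Matrix (Fin m) (Fin m) ℂ) := Matrix.linftyOpSemiNormedRing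
  letI : NormedRing (Matrix (Fin m) (Fin m) ℂ) := Matrix.linftyOpNormedRing
  letI : NormedAlgebra ℂ (Matrix (Fin m) (Fin m) ℂ) := Matrix.linftyOpNormedAlgebra
  have := exp_series_hasSum_exp' (𝕂 := ℂ) (c • A)
  simp only [smul_pow, smul_smul, mul_comm] at this
  exact this

lemma expH {m : ℕ} (A : Matrix (Fin m) (Fin m) ℂ) (hAH : Aᴴ = -A) (c : ℂ)
    (hc : star c = c) : (NormedSpace.exp (c • A))ᴴ = NormedSpace.exp ((-c) • A) := by
  rw [← Matrix.exp_conjTranspose, conjTranspose_smul, hAH, hc, smul_neg, ← neg_smul]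

theorem skew_part_interpolant_series {m : ℕ}
    (Ω : Matrix (Fin m) (Fin m) ℂ) (hΩ : Ωᴴ = -Ω)
    (s : ℝ) (hs : s ∈ Set.Icc (0 : ℝ) 1) (t : ℝ) :
    (let M := NormedSpace.exp (-((s : ℂ) * t) • Ω) *
        (((1 : ℂ) - s) • (1 : Matrix (Fin m) (Fin m) ℂ) + (s : ℂ) • NormedSpace.exp ((t : ℂ) • Ω))
    (1 / 2 : ℂ) • (M - Mᴴ) =
      ∑' k : ℕ, if Odd k then
          ((((1 - s) * s ^ k * (-1) ^ k + s * (1 - s) ^ k) / k.factorial : ℝ) : ℂ) •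
            ((t : ℂ) • Ω) ^ k
        else 0) ∧
    (s = 1 / 2 →
      (let M := NormedSpace.exp (-((s : ℂ) * t) • Ω) *
          (((1 : ℂ) - s) • (1 : Matrix (Fin m) (Fin m) ℂ) + (s : ℂ) • NormedSpace.exp ((t : ℂ) • Ω))
      (1 / 2 : ℂ) • (M - Mᴴ) = 0)) := by
  have hAH : ((t : ℂ) • Ω)ᴴ = -((t : ℂ) • Ω) := by
    rw [conjTranspose_smul, hΩ]
    simp [Complex.conj_ofReal]
  set A : Matrix (Fin m) (Fin m) ℂ := (t : ℂ) • Ω with hA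
  set s' : ℂ := (s : ℂ) with hs'
  set Me : Matrix (Fin m) (Fin m) ℂ := NormedSpace.exp (-((s : ℂ) * t) • Ω) *
      (((1 : ℂ) - s) • (1 : Matrix (Fin m) (Fin m) ℂ) + (s : ℂ) • NormedSpace.exp ((t : ℂ) • Ω))
      with hMe
  have hstar : star s' = s' := by rw [hs']; exact Complex.conj_ofReal s
  have hstar2 : star ((1 : ℂ) - s') = (1 : ℂ) - s' := by
    rw [star_sub, hstar, star_one]
  have hM : Me = ((1 : ℂ) - s') • NormedSpace.exp ((-s') • A) + s' • NormedSpace.exp (((1 : ℂ) - s') • A) := by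
    have h1 : -((s : ℂ) * t) • Ω = (-s') • A := by
      rw [hA, smul_smul, hs']; ring_nf
    have hcomm : Commute ((-s') • A) A := (Commute.refl A).smul_left _
    rw [hMe, h1, mul_add, mul_smul_comm, mul_smul_comm, mul_one, ← hA,
      ← Matrix.exp_add_of_commute (-s' • A) A hcomm,
      show (-s') • A + A = ((1 : ℂ) - s') • A from by module]
  have hMH : Meᴴ = ((1 : ℂ) - s') • NormedSpace.exp (s' • A) + s' • NormedSpace.exp ((-((1 : ℂ) - s')) • A) := by
    rw [hM, conjTranspose_add, conjTranspose_smul, conjTranspose_smul,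
      expH A hAH (-s') (by rw [star_neg, hstar]), expH A hAH ((1 : ℂ) - s') hstar2,
      hstar, hstar2, neg_neg]
  have hdiff : Me - Meᴴ = ((1 : ℂ) - s') • (NormedSpace.exp ((-s') • A) - NormedSpace.exp (s' • A)) +
      s' • (NormedSpace.exp (((1 : ℂ) - s') • A) - NormedSpace.exp ((-((1 : ℂ) - s')) • A)) := by
    rw [hMH, hM]; module
  have key : (1 / 2 : ℂ) • (Me - Meᴴ) =
      ∑' k : ℕ, if Odd k then
          ((((1 - s) * s ^ k * (-1) ^ k + s * (1 - s) ^ k) / k.factorial : ℝ) : ℂ) •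
            ((t : ℂ) • Ω) ^ k
        else 0 := by
    have H : HasSum (fun k : ℕ =>
        (1 / 2 : ℂ) • (((1 : ℂ) - s') •
            (((-s') ^ k * (k.factorial : ℂ)⁻¹) • A ^ k -
              ((s') ^ k * (k.factorial : ℂ)⁻¹) • A ^ k) +
          s' • ((((1 : ℂ) - s') ^ k * (k.factorial : ℂ)⁻¹) • A ^ k -
              ((-((1 : ℂ) - s')) ^ k * (k.factorial : ℂ)⁻¹) • A ^ k)))
        ((1 / 2 : ℂ) • (Me - Meᴴ)) := by
      rw [hdiff]
      exact ((((expS_hasSum A (-s')).sub (expS_hasSum A s')).const_smul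
          ((1 : ℂ) - s')).add (((expS_hasSum A ((1 : ℂ) - s')).sub
          (expS_hasSum A (-((1 : ℂ) - s')))).const_smul s')).const_smul (1 / 2 : ℂ)
    rw [← H.tsum_eq]
    refine tsum_congr fun k => ?_
    have hfac : (k.factorial : ℂ) ≠ 0 := Nat.cast_ne_zero.mpr k.factorial_ne_zero
    rcases Nat.even_or_odd k with hk | hk
    · rw [if_neg (Nat.not_odd_iff_even.mpr hk), hk.neg_pow, hk.neg_pow]
      simp
    · rw [if_pos hk, hk.neg_pow, hk.neg_pow, ← hA,
        ← sub_smul, ← sub_smul, smul_smul, smul_smul, ← add_smul, smul_smul]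
      congr 1
      push_cast
      rw [hk.neg_one_pow]
      field_simp
      ring
  refine ⟨key, fun h => ?_⟩
  show (1 / 2 : ℂ) • (Me - Meᴴ) = 0
  rw [key]
  subst h
  convert tsum_zero with k
  split
  · rename_i hk
    rw [show ((1 : ℝ) - 1/2) = 1/2 by norm_num, hk.neg_one_pow]
    norm_num
  · rfl
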